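/- For ε > 0 and 0 < X_t < 1, the maximizer x* of f(x) = √(1−x) + ε·√(1 − X_t/x) over [X_t, 1] is the unique solution in (X_t,1) of the quartic equation x⁴ − X_t·x³ + (ε·X_t)²·(x − 1) = 0. -/

import Mathlib

open Real Set

theorem rvq_mcp_optimal_bit_allocation (ε Xt : ℝ) (hε : 0 < ε)
    (hXt : 0 < Xt) (hXt1 : Xt < 1) :
    ∃ x : ℝ, x ∈ Set.Ioo Xt 1 ∧
      IsMaxOn (fun y : ℝ => Real.sqrt (1 - y) + ε * Real.sqrt (1 - Xt / y))
        (Set.Icc Xt 1) x ∧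
      x ^ 4 - Xt * x ^ 3 + (ε * Xt) ^ 2 * (x - 1) = 0 ∧
      ∀ y ∈ Set.Ioo Xt 1, y ^ 4 - Xt * y ^ 3 + (ε * Xt) ^ 2 * (y - 1) = 0 → y = x := by
  set g : ℝ → ℝ := fun x => x ^ 4 - Xt * x ^ 3 + (ε * Xt) ^ 2 * (x - 1) with hgdef
  set f : ℝ → ℝ := fun y : ℝ => Real.sqrt (1 - y) + ε * Real.sqrt (1 - Xt / y) with hfdef
  -- g is strictly monotone on [Xt, ∞)
  have hgc : Continuous g := by fun_prop
  have hgmono : StrictMonoOn g (Ici Xt) := by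
    apply strictMonoOn_of_deriv_pos (convex_Ici Xt) hgc.continuousOn
    intro x hx
    rw [interior_Ici] at hx
    have hx' : Xt < x := hx
    have hx0 : 0 < x := lt_trans hXt hx'
    have hd : HasDerivAt g (4 * x ^ 3 - Xt * (3 * x ^ 2) + (ε * Xt) ^ 2 * 1) x := by
      have h1 : HasDerivAt (fun t : ℝ => t ^ 4) (4 * x ^ 3) x := by
        simpa using hasDerivAt_pow 4 x
      have h2 : HasDerivAt (fun t : ℝ => Xt * t ^ 3) (Xt * (3 * x ^ 2)) x := by
        simpa using (hasDerivAt_pow 3 x).const_mul Xt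
      have h3 : HasDerivAt (fun t : ℝ => (ε * Xt) ^ 2 * (t - 1)) ((ε * Xt) ^ 2 * 1) x :=
        ((hasDerivAt_id x).sub_const 1).const_mul _
      exact (h1.sub h2).add h3
    rw [hd.deriv]
    have h4 : 0 < x ^ 2 * (4 * x - 3 * Xt) :=
      mul_pos (pow_pos hx0 2) (by linarith)
    nlinarith [sq_nonneg (ε * Xt)]
  -- root existence
  have hgXt : g Xt < 0 := by
    have : (0:ℝ) < (ε * Xt) ^ 2 := by positivity
    simp only [hgdef]
    nlinarith
  have hg1 : 0 < g 1 := by simp only [hgdef]; nlinarith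
  obtain ⟨x, hxmem, hgx⟩ : ∃ x ∈ Ioo Xt 1, g x = 0 := by
    have := intermediate_value_Ioo (le_of_lt hXt1) hgc.continuousOn
    have h0 : (0:ℝ) ∈ Ioo (g Xt) (g 1) := ⟨hgXt, hg1⟩
    obtain ⟨x, hx, hx0⟩ := this h0
    exact ⟨x, hx, hx0⟩
  -- derivative of f at interior points
  have hfd : ∀ y : ℝ, Xt < y → y < 1 →
      HasDerivAt f ((-1) / (2 * Real.sqrt (1 - y)) +
        ε * ((Xt / y ^ 2) / (2 * Real.sqrt (1 - Xt / y)))) y := by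
    intro y h1 h2
    have hy0 : 0 < y := lt_trans hXt h1
    have hA : (0:ℝ) < 1 - y := by linarith
    have hB : (0:ℝ) < 1 - Xt / y := by
      rw [sub_pos, div_lt_one hy0]; exact h1
    have d1 : HasDerivAt (fun t : ℝ => 1 - t) (-1) y := by
      simpa using (hasDerivAt_id y).const_sub 1
    have s1 : HasDerivAt (fun t : ℝ => Real.sqrt (1 - t)) ((-1) / (2 * Real.sqrt (1 - y))) y :=
      d1.sqrt (by linarith)
    have d2 : HasDerivAt (fun t : ℝ => 1 - Xt / t) (Xt / y ^ 2) y := by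
      have h := ((hasDerivAt_inv (ne_of_gt hy0)).const_mul Xt).const_sub 1
      have he : (fun t : ℝ => 1 - Xt * t⁻¹) = fun t : ℝ => 1 - Xt / t := by
        funext t; rw [div_eq_mul_inv]
      rw [he] at h
      refine h.congr_deriv ?_
      ring
    have s2 : HasDerivAt (fun t : ℝ => Real.sqrt (1 - Xt / t))
        ((Xt / y ^ 2) / (2 * Real.sqrt (1 - Xt / y))) y := d2.sqrt (ne_of_gt hB)
    exact s1.add (s2.const_mul ε)
  -- sign of derivative vs sign of g
  have hsign : ∀ y : ℝ, Xt < y → y < 1 →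
      ((g y < 0 → 0 < (-1) / (2 * Real.sqrt (1 - y)) +
        ε * ((Xt / y ^ 2) / (2 * Real.sqrt (1 - Xt / y)))) ∧
       (0 < g y → (-1) / (2 * Real.sqrt (1 - y)) +
        ε * ((Xt / y ^ 2) / (2 * Real.sqrt (1 - Xt / y))) < 0)) := by
    intro y h1 h2
    have hy0 : 0 < y := lt_trans hXt h1
    have hA2 : Real.sqrt (1 - y) ^ 2 = 1 - y := Real.sq_sqrt (by linarith)
    have hBpos : (0:ℝ) < 1 - Xt / y := by rw [sub_pos, div_lt_one hy0]; exact h1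
    have hB2 : Real.sqrt (1 - Xt / y) ^ 2 = 1 - Xt / y := Real.sq_sqrt (le_of_lt hBpos)
    set A := Real.sqrt (1 - y) with hAdef
    set B := Real.sqrt (1 - Xt / y) with hBdef
    have hA : 0 < A := Real.sqrt_pos.mpr (by linarith)
    have hB : 0 < B := Real.sqrt_pos.mpr hBpos
    have hB2' : y * B ^ 2 = y - Xt := by
      rw [hB2]; field_simp
    have he : (-1) / (2 * A) + ε * ((Xt / y ^ 2) / (2 * B)) =
        (ε * Xt * A - y ^ 2 * B) / (2 * A * B * y ^ 2) := by
      field_simp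
      ring
    constructor
    · intro hgneg
      have hsq : (y ^ 2 * B) ^ 2 < (ε * Xt * A) ^ 2 := by
        have : (y ^ 2 * B) ^ 2 = y ^ 3 * (y * B ^ 2) := by ring
        rw [this, hB2']
        have : (ε * Xt * A) ^ 2 = (ε * Xt) ^ 2 * A ^ 2 := by ring
        rw [this, hA2]
        simp only [hgdef] at hgneg
        nlinarith
      have hlt : y ^ 2 * B < ε * Xt * A :=
        lt_of_pow_lt_pow_left₀ 2 (by positivity) hsq
      rw [he]
      apply div_pos (by linarith) (by positivity)
    · intro hgpos
      have hsq : (ε * Xt * A) ^ 2 < (y ^ 2 * B) ^ 2 := by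
        have h1' : (y ^ 2 * B) ^ 2 = y ^ 3 * (y * B ^ 2) := by ring
        rw [h1', hB2']
        have h2' : (ε * Xt * A) ^ 2 = (ε * Xt) ^ 2 * A ^ 2 := by ring
        rw [h2', hA2]
        simp only [hgdef] at hgpos
        nlinarith
      have hlt : ε * Xt * A < y ^ 2 * B :=
        lt_of_pow_lt_pow_left₀ 2 (by positivity) hsq
      rw [he]
      apply div_neg_of_neg_of_pos (by linarith) (by positivity)
  -- continuity of f on [Xt, 1]
  have hfc : ContinuousOn f (Icc Xt 1) := by
    apply ContinuousOn.add
    · exact (continuousOn_const.sub continuousOn_id).sqrt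
    · apply ContinuousOn.mul continuousOn_const
      apply ContinuousOn.sqrt
      apply ContinuousOn.sub continuousOn_const
      apply ContinuousOn.div continuousOn_const continuousOn_id
      intro t ht
      exact ne_of_gt (lt_of_lt_of_le hXt ht.1)
  obtain ⟨hxXt, hx1⟩ := hxmem
  -- f is increasing on [Xt, x]
  have hmono : StrictMonoOn f (Icc Xt x) := by
    apply strictMonoOn_of_deriv_pos (convex_Icc Xt x)
      (hfc.mono (Icc_subset_Icc le_rfl (le_of_lt hx1)))
    intro y hy
    rw [interior_Icc] at hy
    have h1 : Xt < y := hy.1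
    have h2 : y < 1 := lt_trans hy.2 hx1
    rw [(hfd y h1 h2).deriv]
    apply (hsign y h1 h2).1
    have : g y < g x := hgmono (le_of_lt h1) (le_of_lt (lt_trans h1 hy.2)) hy.2
    rwa [hgx] at this
  -- f is decreasing on [x, 1]
  have hanti : StrictAntiOn f (Icc x 1) := by
    apply strictAntiOn_of_deriv_neg (convex_Icc x 1)
      (hfc.mono (Icc_subset_Icc (le_of_lt hxXt) le_rfl))
    intro y hy
    rw [interior_Icc] at hy
    have h1 : Xt < y := lt_trans hxXt hy.1
    have h2 : y < 1 := hy.2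
    rw [(hfd y h1 h2).deriv]
    apply (hsign y h1 h2).2
    have : g x < g y := hgmono (le_of_lt hxXt) (le_of_lt h1) hy.1
    rwa [hgx] at this
  refine ⟨x, ⟨hxXt, hx1⟩, ?_, by simpa [hgdef] using hgx, ?_⟩
  · intro y hy
    simp only [Set.mem_setOf_eq]
    have hy' : y ∈ Icc Xt 1 := hy
    rcases le_total y x with hle | hle
    · exact hmono.monotoneOn ⟨hy'.1, hle⟩ ⟨le_of_lt hxXt, le_rfl⟩ hle
    · exact hanti.antitoneOn ⟨le_rfl, le_of_lt hx1⟩ ⟨hle, hy'.2⟩ hle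
  · intro y hy hgy
    have hgy' : g y = 0 := by simpa [hgdef] using hgy
    exact hgmono.injOn (le_of_lt hy.1) (le_of_lt hxXt) (by rw [hgy', hgx])
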